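/- For any real a > 0 and positive integer n, ∑_{k=1}^{n} ψ₀(k+a)ψ₂(k+a) = −2∑_{k=1}^{n} ψ₁(k+a)/(k+a) + (a+n)ψ₀(a+n+1)ψ₂(a+n+1) − aψ₀(a+1)ψ₂(a+1) − (a+n)ψ₂(a+n+1) + aψ₂(a+1) + 2ψ₀(a+n+1)ψ₁(a+n+1) − 2ψ₁(a+n+1) − 2ψ₀(a+1)ψ₁(a+1) + 2ψ₁(a+1). -/

import Mathlib

open Finset

/-- The `m`-th polygamma function: the `(m+1)`-th derivative of `log ∘ Γ`. -/
noncomputable def psi (m : ℕ) (x : ℝ) : ℝ :=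
  iteratedDeriv (m + 1) (fun y => Real.log (Real.Gamma y)) x

lemma iteratedDeriv_of_isOpen (n : ℕ) (f : ℝ → ℝ) {s : Set ℝ} (hs : IsOpen s) {x : ℝ}
    (hx : x ∈ s) : iteratedDerivWithin n f s x = iteratedDeriv n f x := by
  simp only [iteratedDerivWithin, iteratedDeriv, iteratedFDerivWithin_of_isOpen n hs hx]

lemma gamma_contDiffAt {x : ℝ} (hx : 0 < x) {n : ℕ∞} : ContDiffAt ℝ n Real.Gamma x := by
  have hG : AnalyticAt ℂ Complex.Gamma (x : ℂ) := by
    have hop : IsOpen {s : ℂ | 0 < s.re} := isOpen_lt continuous_const Complex.continuous_re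
    have hd : DifferentiableOn ℂ Complex.Gamma {s : ℂ | 0 < s.re} := by
      intro s hs
      refine (Complex.differentiableAt_Gamma s ?_).differentiableWithinAt
      intro m hm
      rw [hm] at hs
      simp only [Set.mem_setOf_eq, Complex.neg_re, Complex.natCast_re] at hs
      have : (0:ℝ) ≤ (m:ℝ) := Nat.cast_nonneg m
      linarith
    exact hd.analyticAt (hop.mem_nhds (by simpa using hx))
  have h2 : AnalyticAt ℝ (fun y : ℝ => (Complex.Gamma (y : ℂ)).re) x :=
    (Complex.reCLM.analyticAt _).comp ((hG.restrictScalars).comp (Complex.ofRealCLM.analyticAt x))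
  have h3 : AnalyticAt ℝ Real.Gamma x := by
    refine h2.congr ?_
    filter_upwards with y
    rw [Complex.Gamma_ofReal, Complex.ofReal_re]
  exact h3.contDiffAt.of_le le_top

lemma contDiffAt_logGamma {x : ℝ} (hx : 0 < x) (n : ℕ∞) :
    ContDiffAt ℝ n (fun y => Real.log (Real.Gamma y)) x :=
  (gamma_contDiffAt hx).log (Real.Gamma_pos_of_pos hx).ne'

lemma psi_rec (m : ℕ) {x : ℝ} (hx : 0 < x) :
    psi m (x + 1) = psi m x + iteratedDeriv (m + 1) Real.log x := by
  have heq : (fun z : ℝ => Real.log (Real.Gamma (z + 1))) =ᶠ[nhds x]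
      (Real.log + fun z => Real.log (Real.Gamma z)) := by
    filter_upwards [Ioi_mem_nhds hx] with z hz
    have hz' : (0:ℝ) < z := hz
    simp only [Pi.add_apply]
    rw [Real.Gamma_add_one hz'.ne', Real.log_mul hz'.ne' (Real.Gamma_pos_of_pos hz').ne']
  have h1 : psi m (x + 1) =
      iteratedDeriv (m + 1) (Real.log + fun z => Real.log (Real.Gamma z)) x := by
    rw [psi, ← congrFun (iteratedDeriv_comp_add_const (m + 1)
      (fun y => Real.log (Real.Gamma y)) 1) x]
    exact heq.iteratedDeriv_eq (m + 1)
  have hop : IsOpen (Set.Ioi (0:ℝ)) := isOpen_Ioi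
  have hu : UniqueDiffOn ℝ (Set.Ioi (0:ℝ)) := hop.uniqueDiffOn
  have hxs : x ∈ Set.Ioi (0:ℝ) := hx
  have hlog : ContDiffOn ℝ (m + 1 : ℕ) Real.log (Set.Ioi 0) := fun y hy =>
    (Real.contDiffAt_log.2 (ne_of_gt hy)).contDiffWithinAt
  have hlg : ContDiffOn ℝ (m + 1 : ℕ) (fun y => Real.log (Real.Gamma y)) (Set.Ioi 0) :=
    fun y hy => (contDiffAt_logGamma hy _).contDiffWithinAt
  rw [h1, ← iteratedDeriv_of_isOpen (m+1) _ hop hxs,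
    iteratedDerivWithin_add (hx := hxs) (h := hu) (hlog x hxs) (hlg x hxs),
    iteratedDeriv_of_isOpen (m+1) _ hop hxs, iteratedDeriv_of_isOpen (m+1) _ hop hxs, psi,
    add_comm]

lemma itlog1 (x : ℝ) : iteratedDeriv 1 Real.log x = x⁻¹ := by
  rw [iteratedDeriv_one, Real.deriv_log]

lemma itlog2 (x : ℝ) : iteratedDeriv 2 Real.log x = -(x ^ 2)⁻¹ := by
  rw [iteratedDeriv_succ, funext itlog1, deriv_inv]

lemma itlog3 {x : ℝ} (hx : x ≠ 0) : iteratedDeriv 3 Real.log x = 2 * (x ^ 3)⁻¹ := by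
  rw [iteratedDeriv_succ, funext itlog2]
  have h : HasDerivAt (fun y : ℝ => -((y ^ 2)⁻¹))
      (-(-(↑2 * x ^ (2 - 1)) / (x ^ 2) ^ 2)) x :=
    ((hasDerivAt_pow 2 x).inv (pow_ne_zero 2 hx)).neg
  rw [h.deriv]
  field_simp
  ring

lemma psi0_rec {x : ℝ} (hx : 0 < x) : psi 0 (x + 1) = psi 0 x + x⁻¹ := by
  rw [psi_rec 0 hx, itlog1]

lemma psi1_rec {x : ℝ} (hx : 0 < x) : psi 1 (x + 1) = psi 1 x + -(x ^ 2)⁻¹ := by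
  rw [psi_rec 1 hx, itlog2]

lemma psi2_rec {x : ℝ} (hx : 0 < x) : psi 2 (x + 1) = psi 2 x + 2 * (x ^ 3)⁻¹ := by
  rw [psi_rec 2 hx, itlog3 hx.ne']

theorem stmt_13 (a : ℝ) (ha : 0 < a) (n : ℕ) (hn : 0 < n) :
    ∑ k ∈ Icc 1 n, psi 0 ((k : ℝ) + a) * psi 2 ((k : ℝ) + a) =
      -2 * ∑ k ∈ Icc 1 n, psi 1 ((k : ℝ) + a) / ((k : ℝ) + a) +
        (a + n) * psi 0 (a + n + 1) * psi 2 (a + n + 1) - a * psi 0 (a + 1) * psi 2 (a + 1) -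
        (a + n) * psi 2 (a + n + 1) + a * psi 2 (a + 1) +
        2 * psi 0 (a + n + 1) * psi 1 (a + n + 1) - 2 * psi 1 (a + n + 1) -
        2 * psi 0 (a + 1) * psi 1 (a + 1) + 2 * psi 1 (a + 1) := by
  clear hn
  induction n with
  | zero =>
    simp only [Nat.cast_zero, add_zero, Finset.Icc_eq_empty_of_lt (by norm_num : (0:ℕ) < 1),
      Finset.sum_empty]
    ring
  | succ n ih =>
    rw [Finset.sum_Icc_succ_top (by omega : 1 ≤ n + 1),
      Finset.sum_Icc_succ_top (by omega : 1 ≤ n + 1), ih]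
    have hb : (0:ℝ) < a + n + 1 := by positivity
    have h0 := psi0_rec hb
    have h1 := psi1_rec hb
    have h2 := psi2_rec hb
    push_cast
    rw [show ((n:ℝ) + 1) + a = a + (n:ℝ) + 1 by ring,
      show a + ((n:ℝ) + 1) + 1 = (a + (n:ℝ) + 1) + 1 by ring, h0, h1, h2]
    have hb' : a + (n:ℝ) + 1 ≠ 0 := hb.ne'
    field_simp
    ring
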